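/- Every permutation p can be sorted by at most b(p)/2 block moves, where b(p) is the number of bad pairs of p. In particular, every permutation of length n can be sorted by at most ⌊(n+1)/2⌋ block moves. -/

import Mathlib

/-- Number of descents of a list (one-line notation). -/
def desNum (p : List ℕ) : ℕ :=
  ((Finset.range (p.length - 1)).filter (fun i => p.getD (i+1) 0 < p.getD i 0)).card

/-- The extension of `p` by a leading `0` and trailing `n+1`. -/
def extList (p : List ℕ) : List ℕ := 0 :: (p ++ [p.length + 1])

/-- Number of bad pairs of `p`. -/
def badNum (p : List ℕ) : ℕ :=
  ((Finset.range (p.length + 1)).filter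
    (fun i => (extList p).getD i 0 + 1 ≠ (extList p).getD (i+1) 0)).card

/-- `q` is obtained from `p` by one block move: interchanging two disjoint
nonempty blocks of consecutive entries. -/
def IsBlockMove (p q : List ℕ) : Prop :=
  ∃ A X B Y C : List ℕ, X ≠ [] ∧ Y ≠ [] ∧
    p = A ++ X ++ B ++ Y ++ C ∧ q = A ++ Y ++ B ++ X ++ C

/-- `p` is a permutation of `{1,…,n}` in one-line notation. -/
def IsPermList (p : List ℕ) : Prop := p.Perm (List.range' 1 p.length)

/-- `p` can be sorted to the identity `1 2 … n` using at most `k` block moves. -/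
def SortableIn (p : List ℕ) (k : ℕ) : Prop :=
  ∃ m ≤ k, ∃ f : ℕ → List ℕ, f 0 = p ∧ f m = List.range' 1 p.length ∧
    ∀ i < m, IsBlockMove (f i) (f (i+1))

/-- Every permutation can be sorted in at most `b(p)/2` block moves,
and hence in at most `⌊(n+1)/2⌋` block moves. -/
def bc : List ℕ → ℕ
  | [] => 0
  | [_] => 0
  | a :: b :: t => (if a + 1 = b then 0 else 1) + bc (b :: t)

lemma bc_cons_cons (a b : ℕ) (t : List ℕ) :
    bc (a :: b :: t) = (if a + 1 = b then 0 else 1) + bc (b :: t) := rfl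

lemma badNum_eq_bc_aux (l : List ℕ) :
    ((Finset.range (l.length - 1)).filter
      (fun i => l.getD i 0 + 1 ≠ l.getD (i+1) 0)).card = bc l := by
  induction l with
  | nil => simp [bc]
  | cons a t ih =>
    cases t with
    | nil => simp [bc]
    | cons b t' =>
      rw [Finset.card_filter] at *
      simp only [List.length_cons, Nat.add_sub_cancel] at *
      rw [Finset.sum_range_succ', bc_cons_cons]
      simp only [List.getD_cons_succ, List.getD_cons_zero] at ih ⊢
      rw [ih]
      by_cases h : a + 1 = b <;> simp [h, Nat.add_comm]

lemma badNum_eq_bc (p : List ℕ) : badNum p = bc (extList p) := by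
  have h := badNum_eq_bc_aux (extList p)
  have hl : (extList p).length - 1 = p.length + 1 := by simp [extList]
  rw [hl] at h
  exact h.symm ▸ rfl

def jn (u v : List ℕ) : ℕ := if u.getLastD 0 + 1 = v.headI then 0 else 1

lemma jn_eq_zero {u v : List ℕ} (h : u.getLastD 0 + 1 = v.headI) : jn u v = 0 := by
  unfold jn; rw [if_pos h]

lemma jn_eq_one {u v : List ℕ} (h : u.getLastD 0 + 1 ≠ v.headI) : jn u v = 1 := by
  unfold jn; rw [if_neg h]

lemma jn_le (u v : List ℕ) : jn u v ≤ 1 := by unfold jn; split <;> omega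

lemma bc_append (u v : List ℕ) (hu : u ≠ []) (hv : v ≠ []) :
    bc (u ++ v) = bc u + jn u v + bc v := by
  induction u with
  | nil => simp at hu
  | cons a u' ih =>
    cases u' with
    | nil =>
      cases v with
      | nil => simp at hv
      | cons b t => by_cases h : a + 1 = b <;> simp [bc_cons_cons, jn, bc, h]
    | cons c u'' =>
      have h2 := ih (by simp)
      simp only [List.cons_append, bc_cons_cons] at *
      rw [h2]
      have : jn (a :: c :: u'') v = jn (c :: u'') v := by simp [jn]
      rw [this]
      omega

lemma headI_append (u v : List ℕ) (hu : u ≠ []) : (u ++ v).headI = u.headI := by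
  cases u with | nil => simp at hu | cons a t => simp

lemma headI_mem (u : List ℕ) (hu : u ≠ []) : u.headI ∈ u := by
  cases u with | nil => simp at hu | cons a t => simp

lemma getLastD_mem (u : List ℕ) (hu : u ≠ []) : u.getLastD 0 ∈ u := by
  cases u with
  | nil => simp at hu
  | cons a t =>
    rw [List.getLastD_eq_getLast?, List.getLast?_eq_getLast (l := a :: t) (by simp)]
    simpa using List.getLast_mem (l := a :: t) (by simp)

lemma jn_right (u v w : List ℕ) (hv : v ≠ []) : jn u (v ++ w) = jn u v := by
  simp [jn, headI_append _ _ hv]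

lemma bc_four (u v w t : List ℕ) (hu : u ≠ []) (hv : v ≠ []) (hw : w ≠ []) (ht : t ≠ []) :
    bc (u ++ (v ++ (w ++ t))) =
      bc u + bc v + bc w + bc t + (jn u v + jn v w + jn w t) := by
  rw [bc_append u _ hu (by simp [hv]), bc_append v _ hv (by simp [hw]),
      bc_append w t hw ht, jn_right u _ _ hv, jn_right v _ _ hw]
  omega

lemma bc_five (u v w t s : List ℕ)
    (hu : u ≠ []) (hv : v ≠ []) (hw : w ≠ []) (ht : t ≠ []) (hs : s ≠ []) :
    bc (u ++ (v ++ (w ++ (t ++ s)))) =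
      bc u + bc v + bc w + bc t + bc s + (jn u v + jn v w + jn w t + jn t s) := by
  rw [bc_append u _ hu (by simp [hv]), jn_right u _ _ hv,
      bc_four v w t s hv hw ht hs]
  omega

lemma blockMove_perm {p q : List ℕ} (h : IsBlockMove p q) : p.Perm q := by
  obtain ⟨A, X, B, Y, C, _, _, hp, hq⟩ := h
  subst hp hq
  rw [List.perm_iff_count]
  intro a
  simp [List.count_append]
  omega

lemma key (p : List ℕ) (hp : IsPermList p) (hne : p ≠ List.range' 1 p.length) :
    ∃ q, IsBlockMove p q ∧ badNum q + 2 ≤ badNum p := by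
  classical
  set n := p.length with hn
  -- longest prefix
  have hex : ∃ k, ¬ (List.range' 1 k <+: p) := by
    refine ⟨n + 1, fun h => ?_⟩
    have := h.length_le
    simp [hn] at this
  set k0 := Nat.find hex with hk0
  have hk0spec : ¬ (List.range' 1 k0 <+: p) := Nat.find_spec hex
  have hk0pos : 0 < k0 := by
    rcases Nat.eq_zero_or_pos k0 with h | h
    · exfalso; apply hk0spec; rw [h]; simp
    · exact h
  set r := k0 - 1 with hr
  have hpre : List.range' 1 r <+: p := by
    by_contra hcon
    have := Nat.find_min hex (show r < k0 by omega)
    exact this hcon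
  have hnpre : ¬ (List.range' 1 (r + 1) <+: p) := by
    have : r + 1 = k0 := by omega
    rw [this]; exact hk0spec
  have hrn : r ≤ n := by
    have := hpre.length_le
    simpa using this
  have hrltn : r < n := by
    rcases Nat.lt_or_ge r n with h | h
    · exact h
    · exfalso
      have hreq : r = n := by omega
      apply hne
      have := hpre.eq_of_length (by simp [hreq, hn])
      rw [← this, hreq]
  obtain ⟨rest, hrest⟩ := hpre
  -- rest is a permutation of range' (r+1) (n-r)
  have hsplit : List.range' 1 n = List.range' 1 r ++ List.range' (r + 1) (n - r) := by
    have h := List.range'_append (s := 1) (m := r) (n := n - r) (step := 1)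
    simp only [one_mul] at h
    rw [show (1 + r) = r + 1 by omega] at h
    rw [h]
    congr 1
    omega
  have hrestperm : rest.Perm (List.range' (r + 1) (n - r)) := by
    have h1 : (List.range' 1 r ++ rest).Perm (List.range' 1 r ++ List.range' (r + 1) (n - r)) := by
      rw [hrest, ← hsplit]; exact hp
    exact (List.perm_append_left_iff _).mp h1
  set x := r + 1 with hxdef
  have hx_mem : x ∈ rest := by
    rw [hrestperm.mem_iff, List.mem_range'_1]
    omega
  obtain ⟨M, T, hMT⟩ := List.append_of_mem hx_mem
  have hMne : M ≠ [] := by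
    intro h
    apply hnpre
    refine ⟨T, ?_⟩
    rw [List.range'_concat]
    simp only [one_mul]
    rw [show (1 + r) = x by omega]
    rw [← hrest, hMT, h]
    simp
  have hMTperm : (M ++ T).Perm (List.range' (x + 1) (n - r - 1)) := by
    have h1 : (M ++ x :: T).Perm (x :: List.range' (x + 1) (n - r - 1)) := by
      rw [← hMT]
      have : List.range' (r + 1) (n - r) = x :: List.range' (x + 1) (n - r - 1) := by
        conv_lhs => rw [show n - r = (n - r - 1) + 1 by omega]
        rw [List.range'_succ]
      rw [← this]; exact hrestperm
    have h2 : (M ++ x :: T).Perm (x :: (M ++ T)) := List.perm_middle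
    exact (h2.symm.trans h1).cons_inv
  have hMval : ∀ v ∈ M, x + 1 ≤ v ∧ v ≤ n := by
    intro v hv
    have : v ∈ List.range' (x + 1) (n - r - 1) :=
      hMTperm.mem_iff.mp (List.mem_append_left _ hv)
    rw [List.mem_range'_1] at this
    omega
  -- the minimum of M
  have hFne : M.toFinset.Nonempty := ⟨M.headI, List.mem_toFinset.mpr (headI_mem M hMne)⟩
  set y := M.toFinset.min' hFne with hy
  have hyM : y ∈ M := List.mem_toFinset.mp (M.toFinset.min'_mem hFne)
  have hymin : ∀ v ∈ M, y ≤ v := fun v hv => M.toFinset.min'_le v (List.mem_toFinset.mpr hv)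
  have hybound : x + 1 ≤ y ∧ y ≤ n := hMval y hyM
  set d := y - 1 with hd
  have hdy : d + 1 = y := by omega
  have hdnotM : d ∉ M := fun h => by have := hymin d h; omega
  have hd_rest : d ∈ rest := by
    rw [hrestperm.mem_iff, List.mem_range'_1]
    omega
  have hd_xT : d ∈ x :: T := by
    rw [hMT] at hd_rest
    rcases List.mem_append.mp hd_rest with h | h
    · exact absurd h hdnotM
    · exact h
  obtain ⟨Y0, C, hY0C⟩ := List.append_of_mem hd_xT
  obtain ⟨M1, M2, hM12⟩ := List.append_of_mem hyM
  set A := List.range' 1 r with hA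
  set Bb := y :: M2 with hBb
  set Yy := Y0 ++ [d] with hYy
  have hp_decomp : p = A ++ (M1 ++ (Bb ++ (Yy ++ C))) := by
    rw [← hrest, hMT, hM12, hY0C, hYy]
    simp [List.append_assoc]
  set q := A ++ (Yy ++ (Bb ++ (M1 ++ C))) with hq
  have hYyne : Yy ≠ [] := by simp [hYy]
  have hBbne : Bb ≠ [] := by simp [hBb]
  have hmove : IsBlockMove p q := by
    by_cases hM1 : M1 = []
    · refine ⟨A, Bb, [], Yy, C, hBbne, hYyne, ?_, ?_⟩
      · rw [hp_decomp, hM1]; simp [List.append_assoc]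
      · rw [hq, hM1]; simp [List.append_assoc]
    · refine ⟨A, M1, Bb, Yy, C, hM1, hYyne, ?_, ?_⟩
      · rw [hp_decomp]; simp [List.append_assoc]
      · rw [hq]; simp [List.append_assoc]
  refine ⟨q, hmove, ?_⟩
  -- lengths
  have hqlen : q.length = p.length := by
    rw [hq, hp_decomp]; simp; omega
  -- value facts for junctions
  have hynotxT : y ∉ x :: T := by
    have hnodup : p.Nodup := hp.symm.nodup (List.nodup_range' (s := 1) (n := n))
    have hrestnodup : rest.Nodup := by
      rw [← hrest] at hnodup
      exact hnodup.of_append_right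
    rw [hMT] at hrestnodup
    exact fun h => (List.disjoint_of_nodup_append hrestnodup) hyM h
  set E := (0 : ℕ) :: A with hE
  set C' := C ++ [n + 1] with hC'
  have hEne : E ≠ [] := by simp [hE]
  have hC'ne : C' ≠ [] := by simp [hC']
  have vE : E.getLastD 0 = r := by
    rw [hE, hA]
    cases r with
    | zero => rfl
    | succ k =>
      rw [List.range'_concat]
      rw [show ((0:ℕ) :: (List.range' 1 k ++ [1 + 1 * k])) = (0 :: List.range' 1 k) ++ [1 + 1 * k] from rfl,
          List.getLastD_concat]
      omega
  have vYh : Yy.headI = x := by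
    rw [hYy]
    cases Y0 with
    | nil =>
      simp at hY0C
      simp [hY0C.1.symm]
    | cons a Y0' =>
      simp only [List.cons_append] at hY0C ⊢
      have : a = x := by
        have := hY0C
        simp at this
        exact this.1.symm
      simp [this]
  have vYl : Yy.getLastD 0 = d := by rw [hYy]; exact List.getLastD_concat
  have vBh : Bb.headI = y := rfl
  have vBl_mem : Bb.getLastD 0 ∈ M := by
    have := getLastD_mem Bb hBbne
    rw [hM12]
    rw [hBb] at this
    exact List.mem_append_right _ this
  have vC'h : C'.headI ≠ y := by
    rw [hC']
    cases C with
    | nil =>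
      simp
      omega
    | cons c Ct =>
      simp only [List.cons_append, List.headI]
      intro h
      apply hynotxT
      rw [hY0C, ← h]
      exact List.mem_append_right _ (by simp)
  -- junction values
  have jEY : jn E Yy = 0 := jn_eq_zero (by rw [vE, vYh])
  have jYB : jn Yy Bb = 0 := jn_eq_zero (by rw [vYl, vBh]; exact hdy)
  have jBY : jn Bb Yy = 1 := by
    have h := hMval _ vBl_mem
    exact jn_eq_one (by rw [vYh]; omega)
  have jYC : jn Yy C' = 1 := by
    refine jn_eq_one ?_
    rw [vYl]
    intro h
    apply vC'h
    omega
  -- final computation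
  rw [badNum_eq_bc, badNum_eq_bc]
  have hextp : extList p = E ++ (M1 ++ (Bb ++ (Yy ++ C'))) := by
    rw [extList, ← hn, hp_decomp, hE, hC']
    simp [List.append_assoc]
  have hextq : extList q = E ++ (Yy ++ (Bb ++ (M1 ++ C'))) := by
    rw [extList, hqlen, ← hn, hE, hC', hq]
    simp [List.append_assoc]
  by_cases hM1 : M1 = []
  · rw [hextp, hextq, hM1]
    simp only [List.nil_append]
    rw [bc_four E Bb Yy C' hEne hBbne hYyne hC'ne,
        bc_four E Yy Bb C' hEne hYyne hBbne hC'ne]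
    have jEB : jn E Bb = 1 := by
      have := hybound
      exact jn_eq_one (by rw [vE, vBh]; omega)
    have h1 := jn_le Bb C'
    omega
  · rw [hextp, hextq]
    rw [bc_five E M1 Bb Yy C' hEne hM1 hBbne hYyne hC'ne,
        bc_five E Yy Bb M1 C' hEne hYyne hBbne hM1 hC'ne]
    have hM1h_mem : M1.headI ∈ M := by
      rw [hM12]; exact List.mem_append_left _ (headI_mem M1 hM1)
    have hM1l_mem : M1.getLastD 0 ∈ M := by
      rw [hM12]; exact List.mem_append_left _ (getLastD_mem M1 hM1)
    have jEM : jn E M1 = 1 := by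
      refine jn_eq_one ?_
      have := hMval _ hM1h_mem
      rw [vE]; omega
    have jMB : jn M1 Bb = 1 := by
      refine jn_eq_one ?_
      rw [vBh]
      intro h
      apply hdnotM
      have h2 : M1.getLastD 0 = d := by omega
      rw [← h2]; exact hM1l_mem
    have h1 := jn_le Bb M1
    have h2 := jn_le M1 C'
    omega

lemma sortable_aux (b : ℕ) : ∀ p, IsPermList p → badNum p ≤ b → SortableIn p (badNum p / 2) := by
  induction b using Nat.strong_induction_on with
  | _ b ih =>
    intro p hp hb
    by_cases hne : p = List.range' 1 p.length
    · exact ⟨0, Nat.zero_le _, fun _ => p, rfl, hne, fun i hi => absurd hi (by omega)⟩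
    · obtain ⟨q, hmove, hbad⟩ := key p hp hne
      have hqp : q.Perm p := (blockMove_perm hmove).symm
      have hqlen : q.length = p.length := hqp.length_eq
      have hq : IsPermList q := by rw [IsPermList, hqlen]; exact hqp.trans hp
      have hblt : badNum q < b := by omega
      obtain ⟨m, hm, f, hf0, hfm, hsteps⟩ := ih (badNum q) hblt q hq le_rfl
      refine ⟨m + 1, by omega, fun i => if i = 0 then p else f (i - 1), by simp, ?_, ?_⟩
      · simp only [Nat.add_sub_cancel, if_neg (Nat.succ_ne_zero m)]
        rw [hfm, hqlen]
      · intro i hi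
        cases i with
        | zero => simpa using (hf0.symm ▸ hmove)
        | succ j =>
          simp only [Nat.succ_ne_zero, if_false, Nat.add_sub_cancel]
          exact hsteps j (by omega)


theorem sortable_badNum (p : List ℕ) (hp : IsPermList p) :
    SortableIn p (badNum p / 2) ∧ SortableIn p ((p.length + 1) / 2) := by
  have h1 : SortableIn p (badNum p / 2) := sortable_aux (badNum p) p hp le_rfl
  refine ⟨h1, ?_⟩
  have hb : badNum p ≤ p.length + 1 := by
    have := Finset.card_filter_le (Finset.range (p.length + 1))
      (fun i => (extList p).getD i 0 + 1 ≠ (extList p).getD (i+1) 0)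
    simpa [badNum] using this
  obtain ⟨m, hm, f, h0, hmf, hs⟩ := h1
  exact ⟨m, le_trans hm (by omega), f, h0, hmf, hs⟩
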